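/- Define a(I,θ) = ∂_yH(ψ(I,θ))/ω(I) for (I,θ) ∈ (0, r₀) × ℝ. Then there exist r ∈ (0, r₀] and a constant C > 0 such that for all I ∈ (0, r): sup_{θ∈ℝ} ( |a(I,θ)| + |∂_θ a(I,θ)| ) ≤ C√I and sup_{θ∈ℝ} |∂_I a(I,θ)| ≤ C/√I. -/

import Mathlib

open MeasureTheory Filter Topology

open Set

lemma mvt01 {f f' : ℝ → ℝ} {b : ℝ} (hb : 0 < b)
    (hf : ∀ t ∈ Set.Icc (0:ℝ) b, HasDerivAt f (f' t) t) :
    ∃ s ∈ Set.Ioo (0:ℝ) b, f b - f 0 = f' s * b := by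
  obtain ⟨c, hc, heq⟩ := exists_hasDerivAt_eq_slope f f' hb
    (fun t ht => (hf t ht).continuousAt.continuousWithinAt)
    (fun t ht => hf t ⟨le_of_lt ht.1, le_of_lt ht.2⟩)
  refine ⟨c, hc, ?_⟩
  rw [heq, sub_zero, div_mul_cancel₀ _ hb.ne']

lemma posdef_bound (B : ℝ × ℝ →L[ℝ] (ℝ × ℝ →L[ℝ] ℝ))
    (hpos : ∀ u : ℝ × ℝ, u ≠ 0 → 0 < B u u) :
    ∃ m > 0, ∀ u : ℝ × ℝ, m * ‖u‖ ^ 2 ≤ B u u := by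
  have hcont : Continuous fun u : ℝ × ℝ => B u u := by
    exact (B.continuous₂.comp (continuous_id.prodMk continuous_id))
  have hne : (Metric.sphere (0:ℝ×ℝ) 1).Nonempty := by
    refine ⟨((0:ℝ),(1:ℝ)), ?_⟩
    simp [Prod.norm_def]
  obtain ⟨u₀, hu₀, hmin⟩ := (isCompact_sphere (0:ℝ×ℝ) 1).exists_isMinOn hne
    hcont.continuousOn
  have hu₀n : ‖u₀‖ = 1 := by simpa using hu₀
  have hu₀ne : u₀ ≠ 0 := by
    intro h; rw [h] at hu₀n; simp at hu₀n
  refine ⟨B u₀ u₀, hpos u₀ hu₀ne, fun u => ?_⟩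
  rcases eq_or_ne u 0 with rfl | hu
  · simp
  · have hn : ‖u‖ ≠ 0 := norm_ne_zero_iff.2 hu
    set v : ℝ × ℝ := ‖u‖⁻¹ • u with hv
    have hvs : v ∈ Metric.sphere (0:ℝ×ℝ) 1 := by
      simp [hv, norm_smul, abs_of_nonneg (inv_nonneg.2 (norm_nonneg u)),
        inv_mul_cancel₀ hn]
    have h1 : B u₀ u₀ ≤ B v v := hmin hvs
    have h2 : B v v = ‖u‖⁻¹ ^ 2 * B u u := by
      simp [hv, _root_.map_smul, smul_smul]
      ring
    have hpow : (0:ℝ) < ‖u‖ ^ 2 := by positivity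
    have hinv : ‖u‖⁻¹ ^ 2 * ‖u‖ ^ 2 = 1 := by field_simp
    have h3 := mul_le_mul_of_nonneg_right h1 hpow.le
    rw [h2] at h3
    calc B u₀ u₀ * ‖u‖ ^ 2 ≤ ‖u‖⁻¹ ^ 2 * B u u * ‖u‖ ^ 2 := h3
      _ = ‖u‖⁻¹ ^ 2 * ‖u‖ ^ 2 * (B u u) := by ring
      _ = B u u := by rw [hinv, one_mul]

open Set

section quad
variable {H : ℝ × ℝ → ℝ}

lemma line_deriv (hHC2 : ContDiff ℝ 2 H) (u : ℝ × ℝ) (t : ℝ) :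
    HasDerivAt (fun s : ℝ => H (s • u)) (fderiv ℝ H (t • u) u) t := by
  have h1 : HasFDerivAt H (fderiv ℝ H (t • u)) (t • u) :=
    ((hHC2.differentiable (by norm_num)) (t • u)).hasFDerivAt
  have h2 : HasDerivAt (fun s : ℝ => s • u) u t := by
    simpa using (hasDerivAt_id t).smul_const u
  exact h1.comp_hasDerivAt t h2

lemma line_deriv2 (hHC2 : ContDiff ℝ 2 H) (u e : ℝ × ℝ) (t : ℝ) :
    HasDerivAt (fun s : ℝ => fderiv ℝ H (s • u) e)
      (fderiv ℝ (fderiv ℝ H) (t • u) u e) t := by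
  have hG : Differentiable ℝ (fderiv ℝ H) :=
    (hHC2.fderiv_right (m := 1) (by norm_num)).differentiable (by norm_num)
  have h1 : HasFDerivAt (fderiv ℝ H) (fderiv ℝ (fderiv ℝ H) (t • u)) (t • u) :=
    (hG (t • u)).hasFDerivAt
  have h2 : HasDerivAt (fun s : ℝ => s • u) u t := by
    simpa using (hasDerivAt_id t).smul_const u
  have h3 : HasDerivAt (fun s : ℝ => fderiv ℝ H (s • u))
      (fderiv ℝ (fderiv ℝ H) (t • u) u) t := h1.comp_hasDerivAt t h2
  simpa using h3.clm_apply (hasDerivAt_const t e)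

lemma grad_bound (hHC2 : ContDiff ℝ 2 H) (hgrad0 : fderiv ℝ H (0, 0) = 0)
    {M : ℝ} (hM : ∀ v : ℝ × ℝ, ‖v‖ ≤ 1 → ‖fderiv ℝ (fderiv ℝ H) v‖ ≤ M) :
    ∀ u : ℝ × ℝ, ‖u‖ ≤ 1 → ‖fderiv ℝ H u‖ ≤ M * ‖u‖ := by
  intro u hu
  have hG : Differentiable ℝ (fderiv ℝ H) :=
    (hHC2.fderiv_right (m := 1) (by norm_num)).differentiable (by norm_num)
  have h0 : fderiv ℝ H (0 : ℝ × ℝ) = 0 := hgrad0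
  have := (convex_closedBall (0:ℝ×ℝ) 1).norm_image_sub_le_of_norm_fderiv_le
    (fun x _ => hG x)
    (fun x hx => hM x (by simpa [Metric.mem_closedBall, dist_eq_norm] using hx))
    (Metric.mem_closedBall_self one_pos.le)
    (by simpa [Metric.mem_closedBall, dist_eq_norm] using hu)
  simpa [h0] using this

lemma H_upper (hHC2 : ContDiff ℝ 2 H) (hH0 : H (0, 0) = 0)
    (hgrad0 : fderiv ℝ H (0, 0) = 0)
    {M : ℝ} (hM : ∀ v : ℝ × ℝ, ‖v‖ ≤ 1 → ‖fderiv ℝ (fderiv ℝ H) v‖ ≤ M) :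
    ∀ u : ℝ × ℝ, ‖u‖ ≤ 1 → |H u| ≤ M * ‖u‖ ^ 2 := by
  intro u hu
  obtain ⟨s, hs, heq⟩ := mvt01 one_pos (fun t _ => line_deriv hHC2 u t)
  have h0 : H ((0:ℝ) • u) = 0 := by rw [zero_smul]; exact hH0
  have hsu : ‖s • u‖ ≤ ‖u‖ := by
    rw [norm_smul, Real.norm_eq_abs, abs_of_pos hs.1]
    nlinarith [norm_nonneg u, hs.2]
  have hb : |fderiv ℝ H (s • u) u| ≤ M * ‖u‖ ^ 2 := by
    calc |fderiv ℝ H (s • u) u| ≤ ‖fderiv ℝ H (s • u)‖ * ‖u‖ :=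
          (fderiv ℝ H (s • u)).le_opNorm u
      _ ≤ (M * ‖s • u‖) * ‖u‖ := by
          have := grad_bound hHC2 hgrad0 hM (s • u) (le_trans hsu hu)
          exact mul_le_mul_of_nonneg_right this (norm_nonneg u)
      _ ≤ M * ‖u‖ ^ 2 := by
          have hM0 : 0 ≤ M := le_trans (ContinuousLinearMap.opNorm_nonneg _) (hM 0 (by simp))
          rw [pow_two, ← mul_assoc]
          gcongr
  have : H ((1:ℝ) • u) - H ((0:ℝ) • u) = fderiv ℝ H (s • u) u * 1 := heq
  simp only [one_smul, h0, sub_zero, mul_one] at this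
  rw [this]; exact hb

end quad

section quad2
variable {H : ℝ × ℝ → ℝ}

lemma bilin_diff_bound (B B0 : ℝ × ℝ →L[ℝ] (ℝ × ℝ →L[ℝ] ℝ)) (u e : ℝ × ℝ) :
    |B u e - B0 u e| ≤ ‖B - B0‖ * ‖u‖ * ‖e‖ := by
  have h1 : B u e - B0 u e = ((B - B0) u) e := by
    simp [ContinuousLinearMap.sub_apply]
  rw [h1]
  calc |((B - B0) u) e| ≤ ‖(B - B0) u‖ * ‖e‖ := ((B - B0) u).le_opNorm e
    _ ≤ ‖B - B0‖ * ‖u‖ * ‖e‖ :=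
      mul_le_mul_of_nonneg_right ((B - B0).le_opNorm u) (norm_nonneg e)

lemma inner_slope (hHC2 : ContDiff ℝ 2 H) (hgrad0 : fderiv ℝ H (0, 0) = 0)
    {m δ : ℝ} (hm : 0 < m) (hδ1 : δ ≤ 1)
    (hm0 : ∀ u : ℝ × ℝ, m * ‖u‖ ^ 2 ≤ fderiv ℝ (fderiv ℝ H) 0 u u)
    (hδB : ∀ v : ℝ × ℝ, ‖v‖ ≤ δ → ‖fderiv ℝ (fderiv ℝ H) v - fderiv ℝ (fderiv ℝ H) 0‖ ≤ m / 2)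
    (u : ℝ × ℝ) (hu : ‖u‖ ≤ δ) {s : ℝ} (hs : s ∈ Set.Ioc (0:ℝ) 1) :
    m / 2 * ‖u‖ ^ 2 * s ≤ fderiv ℝ H (s • u) u := by
  obtain ⟨τ, hτ, heq⟩ := mvt01 hs.1 (fun t _ => line_deriv2 hHC2 u u t)
  have h0 : fderiv ℝ H ((0:ℝ) • u) u = 0 := by
    rw [zero_smul]
    have : fderiv ℝ H (0 : ℝ × ℝ) = 0 := hgrad0
    simp [this]
  have hτu : ‖τ • u‖ ≤ δ := by
    rw [norm_smul, Real.norm_eq_abs, abs_of_pos hτ.1]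
    nlinarith [norm_nonneg u, hτ.2, hs.2]
  have hBB := bilin_diff_bound (fderiv ℝ (fderiv ℝ H) (τ • u)) (fderiv ℝ (fderiv ℝ H) 0) u u
  have hd := hδB (τ • u) hτu
  set A : ℝ := fderiv ℝ (fderiv ℝ H) (τ • u) u u with hA
  set A0 : ℝ := fderiv ℝ (fderiv ℝ H) 0 u u with hA0
  set nd : ℝ := ‖fderiv ℝ (fderiv ℝ H) (τ • u) - fderiv ℝ (fderiv ℝ H) 0‖ with hnd
  have hmu := hm0 u
  have hn : (0:ℝ) ≤ ‖u‖ := norm_nonneg u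
  have hlow : m / 2 * ‖u‖ ^ 2 ≤ A := by
    have h1 := abs_le.1 hBB
    nlinarith [h1.1, mul_le_mul_of_nonneg_right (mul_le_mul_of_nonneg_right hd hn) hn]
  have heq2 : fderiv ℝ H (s • u) u = A * s := by
    rw [h0, sub_zero] at heq
    exact heq
  rw [heq2]
  have hs0 : 0 < s := hs.1
  nlinarith [hlow, hs0, sq_nonneg ‖u‖]

end quad2

section quad3
variable {H : ℝ × ℝ → ℝ}

lemma H_lower (hHC2 : ContDiff ℝ 2 H) (hH0 : H (0, 0) = 0)
    (hgrad0 : fderiv ℝ H (0, 0) = 0)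
    {m δ : ℝ} (hm : 0 < m) (hδ1 : δ ≤ 1)
    (hm0 : ∀ u : ℝ × ℝ, m * ‖u‖ ^ 2 ≤ fderiv ℝ (fderiv ℝ H) 0 u u)
    (hδB : ∀ v : ℝ × ℝ, ‖v‖ ≤ δ → ‖fderiv ℝ (fderiv ℝ H) v - fderiv ℝ (fderiv ℝ H) 0‖ ≤ m / 2) :
    ∀ u : ℝ × ℝ, ‖u‖ ≤ δ → m / 4 * ‖u‖ ^ 2 ≤ H u := by
  intro u hu
  have hder : ∀ t ∈ Set.Icc (0:ℝ) 1, HasDerivAt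
      (fun t : ℝ => H (t • u) - m / 4 * ‖u‖ ^ 2 * t ^ 2)
      (fderiv ℝ H (t • u) u - m / 2 * ‖u‖ ^ 2 * t) t := by
    intro t _
    have h1 := line_deriv hHC2 u t
    have h2 : HasDerivAt (fun t : ℝ => m / 4 * ‖u‖ ^ 2 * t ^ 2)
        (m / 2 * ‖u‖ ^ 2 * t) t := by
      have := ((hasDerivAt_pow 2 t).const_mul (m / 4 * ‖u‖ ^ 2))
      exact this.congr_deriv (by rw [show (2:ℕ) - 1 = 1 from rfl]; push_cast; ring)
    exact h1.sub h2
  obtain ⟨s, hs, heq⟩ := mvt01 one_pos hder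
  have h0 : H ((0:ℝ) • u) = 0 := by rw [zero_smul]; exact hH0
  have hin := inner_slope hHC2 hgrad0 hm hδ1 hm0 hδB u hu (s := s) ⟨hs.1, hs.2.le⟩
  have : H ((1:ℝ) • u) - m / 4 * ‖u‖ ^ 2 * 1 ^ 2 - (H ((0:ℝ) • u) - m / 4 * ‖u‖ ^ 2 * 0 ^ 2)
      = (fderiv ℝ H (s • u) u - m / 2 * ‖u‖ ^ 2 * s) * 1 := heq
  simp only [one_smul, one_pow, mul_one, h0] at this
  nlinarith [hin, this]

lemma grad_y_lower (hHC2 : ContDiff ℝ 2 H) (hgrad0 : fderiv ℝ H (0, 0) = 0)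
    {m δ : ℝ} (hm : 0 < m) (hδ1 : δ ≤ 1)
    (hm0 : ∀ u : ℝ × ℝ, m * ‖u‖ ^ 2 ≤ fderiv ℝ (fderiv ℝ H) 0 u u)
    (hδB : ∀ v : ℝ × ℝ, ‖v‖ ≤ δ → ‖fderiv ℝ (fderiv ℝ H) v - fderiv ℝ (fderiv ℝ H) 0‖ ≤ m / 2) :
    ∀ y : ℝ, ‖(((0:ℝ), y) : ℝ × ℝ)‖ ≤ δ →
      m / 2 * |y| ≤ |fderiv ℝ H ((0:ℝ), y) ((0:ℝ), (1:ℝ))| := by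
  intro y hy
  set u : ℝ × ℝ := ((0:ℝ), y) with hu
  set e : ℝ × ℝ := ((0:ℝ), (1:ℝ)) with he
  obtain ⟨s, hs, heq⟩ := mvt01 one_pos (fun t _ => line_deriv2 hHC2 u e t)
  have h0 : fderiv ℝ H ((0:ℝ) • u) e = 0 := by
    rw [zero_smul]
    have : fderiv ℝ H (0 : ℝ × ℝ) = 0 := hgrad0
    simp [this]
  have hsu : ‖s • u‖ ≤ δ := by
    rw [norm_smul, Real.norm_eq_abs, abs_of_pos hs.1]
    nlinarith [norm_nonneg u, hs.2, hy]
  -- u = y • e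
  have hue : u = y • e := by simp [hu, he, Prod.smul_mk]
  have hsplit : fderiv ℝ (fderiv ℝ H) (s • u) u e
      = y * fderiv ℝ (fderiv ℝ H) (s • u) e e := by
    rw [hue, _root_.map_smul]
    simp
  have hee : ‖e‖ = 1 := by simp [he, Prod.norm_def]
  have hBB := bilin_diff_bound (fderiv ℝ (fderiv ℝ H) (s • u)) (fderiv ℝ (fderiv ℝ H) 0) e e
  have hd := hδB (s • u) hsu
  have hcc : m / 2 ≤ fderiv ℝ (fderiv ℝ H) (s • u) e e := by
    have hmu := hm0 e
    rw [hee] at hBB hmu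
    have h1 := abs_le.1 hBB
    nlinarith [h1.1, hd]
  have heq2 : fderiv ℝ H u e = y * fderiv ℝ (fderiv ℝ H) (s • u) e e := by
    have h1 : fderiv ℝ H ((1:ℝ) • u) e - fderiv ℝ H ((0:ℝ) • u) e
        = fderiv ℝ (fderiv ℝ H) (s • u) u e * 1 := heq
    rw [h0, sub_zero, one_smul, mul_one, hsplit] at h1
    exact h1
  rw [heq2, abs_mul]
  have : m / 2 ≤ |fderiv ℝ (fderiv ℝ H) (s • u) e e| :=
    le_trans hcc (le_abs_self _)
  calc m / 2 * |y| ≤ |fderiv ℝ (fderiv ℝ H) (s • u) e e| * |y| :=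
        mul_le_mul_of_nonneg_right this (abs_nonneg y)
    _ = |y| * |fderiv ℝ (fderiv ℝ H) (s • u) e e| := mul_comm _ _

end quad3

lemma om_bound {K Om Om' : ℝ → ℝ} {r₀ c₁ c₂ : ℝ} (hc₁ : 0 < c₁) (hc₂ : 0 < c₂)
    (hK : ∀ I : ℝ, 0 < I → HasDerivAt K (Om I) I)
    (hOm' : ∀ I : ℝ, 0 < I → HasDerivAt Om (Om' I) I)
    (hKgrowth : ∀ I ∈ Set.Ioo (0:ℝ) r₀, c₁ * I ≤ K I ∧ K I ≤ c₂ * I ∧ |Om' I| ≤ c₂ / I) :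
    ∀ I ∈ Set.Ioo (0:ℝ) r₀, Om I ≤ 3 * c₂ := by
  intro I hI
  obtain ⟨hI0, hIr⟩ := hI
  have hI2 : 0 < I / 2 := by linarith
  have h2I : I / 2 < I := by linarith
  obtain ⟨ξ, hξ, hξeq⟩ := exists_hasDerivAt_eq_slope K Om h2I
    (fun t ht => (hK t (lt_of_lt_of_le hI2 ht.1)).continuousAt.continuousWithinAt)
    (fun t ht => hK t (lt_trans hI2 ht.1))
  have hξ0 : 0 < ξ := lt_trans hI2 hξ.1
  have hKI := hKgrowth I ⟨hI0, hIr⟩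
  have hKI2 := hKgrowth (I / 2) ⟨hI2, by linarith⟩
  have hOmξ : Om ξ ≤ 2 * c₂ := by
    rw [hξeq]
    rw [div_le_iff₀ (by linarith : (0:ℝ) < I - I / 2)]
    nlinarith [hKI.2.1, hKI2.1]
  obtain ⟨η, hη, hηeq⟩ := exists_hasDerivAt_eq_slope Om Om' hξ.2
    (fun t ht => (hOm' t (lt_of_lt_of_le hξ0 ht.1)).continuousAt.continuousWithinAt)
    (fun t ht => hOm' t (lt_trans hξ0 ht.1))
  have hη0 : 0 < η := lt_trans hξ0 hη.1
  have hηr : η < r₀ := lt_trans hη.2 hIr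
  have hOη := (hKgrowth η ⟨hη0, hηr⟩).2.2
  have hstep : Om I - Om ξ ≤ c₂ := by
    have h1 : Om I - Om ξ = Om' η * (I - ξ) := by
      rw [hηeq]
      field_simp
      rw [mul_div_assoc, div_self (by linarith [hη.2, hη.1] : I - ξ ≠ 0), mul_one]
    rw [h1]
    have h2 : Om' η ≤ c₂ / η := le_trans (le_abs_self _) hOη
    have h3 : c₂ / η ≤ c₂ / (I / 2) := by
      apply div_le_div_of_nonneg_left hc₂.le hI2
      linarith [hη.1, hξ.1]
    have h4 : 0 ≤ I - ξ := by linarith [hξ.2]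
    have h5 : I - ξ ≤ I / 2 := by linarith [hξ.1]
    calc Om' η * (I - ξ) ≤ c₂ / (I / 2) * (I - ξ) := by
          apply mul_le_mul_of_nonneg_right (le_trans h2 h3) h4
      _ ≤ c₂ / (I / 2) * (I / 2) := by
          apply mul_le_mul_of_nonneg_left h5 (by positivity)
      _ = c₂ := by field_simp
  linarith

lemma quot_bound {X Z Omv w Λ WX WZ : ℝ} (hw : 0 < w) (h1 : w ≤ Omv) (h2 : Omv ≤ Λ)
    (hWX : 0 ≤ WX) (hX : |X| ≤ WX) (hZ : |Z| ≤ WZ) :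
    |(X * Omv - Z) / Omv ^ 2| ≤ (WX * Λ + WZ) / w ^ 2 := by
  have hOmpos : 0 < Omv := lt_of_lt_of_le hw h1
  have hnum : |X * Omv - Z| ≤ WX * Λ + WZ := by
    calc |X * Omv - Z| ≤ |X * Omv| + |Z| := abs_sub _ _
      _ = |X| * |Omv| + |Z| := by rw [abs_mul]
      _ ≤ WX * Λ + WZ := by
          have : |Omv| = Omv := abs_of_pos hOmpos
          rw [this]
          have h3 : |X| * Omv ≤ WX * Λ :=
            mul_le_mul hX h2 hOmpos.le hWX
          linarith [hZ]
  rw [abs_div, abs_pow, abs_of_pos hOmpos]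
  exact div_le_div₀ (le_trans (abs_nonneg _) hnum) hnum (by positivity)
    (pow_le_pow_left₀ hw.le h1 2)

set_option maxHeartbeats 4000000 in
/-- With `a(I,θ) = ∂_yH(ψ(I,θ))/ω(I)` the noise coefficient of the action
variable, there are `r ∈ (0, r₀]` and `C > 0` such that for all `I ∈ (0, r)`,
`sup_θ (|a(I,θ)| + |∂_θa(I,θ)|) ≤ C√I` and `sup_θ |∂_Ia(I,θ)| ≤ C/√I`. -/
theorem stmt_18
    (H : ℝ × ℝ → ℝ) (hHC2 : ContDiff ℝ 2 H) (hH0 : H (0, 0) = 0)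
    (hgrad0 : fderiv ℝ H (0, 0) = 0)
    (hHess : ∀ u : ℝ × ℝ, u ≠ 0 → 0 < iteratedFDeriv ℝ 2 H (0, 0) ![u, u])
    (K Om Om' : ℝ → ℝ) (ω₀ : ℝ) (hω₀ : 0 < ω₀)
    (hK : ∀ I : ℝ, 0 < I → HasDerivAt K (Om I) I)
    (hOmlb : ∀ I : ℝ, 0 < I → ω₀ ≤ Om I)
    (hOm' : ∀ I : ℝ, 0 < I → HasDerivAt Om (Om' I) I)
    (r₀ c₁ c₂ : ℝ) (hr₀ : 0 < r₀) (hc₁ : 0 < c₁) (hc₂ : 0 < c₂)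
    (hKgrowth : ∀ I ∈ Set.Ioo (0:ℝ) r₀, c₁ * I ≤ K I ∧ K I ≤ c₂ * I ∧ |Om' I| ≤ c₂ / I)
    (ψ ψI ψθ ψIθ : ℝ → ℝ → ℝ × ℝ)
    (hper : ∀ I θ : ℝ, ψ I (θ + 1) = ψ I θ)
    (hψθ : ∀ I ∈ Set.Ioo (0:ℝ) r₀, ∀ θ : ℝ, HasDerivAt (fun θ' => ψ I θ') (ψθ I θ) θ)
    (hψI : ∀ I ∈ Set.Ioo (0:ℝ) r₀, ∀ θ : ℝ, HasDerivAt (fun I' => ψ I' θ) (ψI I θ) I)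
    (hψθcont : ContinuousOn (Function.uncurry ψθ) (Set.Ioo (0:ℝ) r₀ ×ˢ Set.univ))
    (hψIcont : ContinuousOn (Function.uncurry ψI) (Set.Ioo (0:ℝ) r₀ ×ˢ Set.univ))
    (hmixed1 : ∀ I ∈ Set.Ioo (0:ℝ) r₀, ∀ θ : ℝ, HasDerivAt (fun θ' => ψI I θ') (ψIθ I θ) θ)
    (hmixed2 : ∀ I ∈ Set.Ioo (0:ℝ) r₀, ∀ θ : ℝ, HasDerivAt (fun I' => ψθ I' θ) (ψIθ I θ) I)
    (hmixedcont : ContinuousOn (Function.uncurry ψIθ) (Set.Ioo (0:ℝ) r₀ ×ˢ Set.univ))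
    (hlevel : ∀ I ∈ Set.Ioo (0:ℝ) r₀, ∀ θ : ℝ, H (ψ I θ) = K I)
    (hψ10 : ∀ I ∈ Set.Ioo (0:ℝ) r₀, (ψ I 0).1 = 0)
    (hψI10 : ∀ I ∈ Set.Ioo (0:ℝ) r₀, (ψI I 0).1 = 0)
    (hθ1 : ∀ I ∈ Set.Ioo (0:ℝ) r₀, ∀ θ : ℝ,
      (ψθ I θ).1 = -(fderiv ℝ H (ψ I θ)) (0, 1) / Om I)
    (hθ2 : ∀ I ∈ Set.Ioo (0:ℝ) r₀, ∀ θ : ℝ,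
      (ψθ I θ).2 = (fderiv ℝ H (ψ I θ)) (1, 0) / Om I)
    (hψsmall : ∀ δ : ℝ, 0 < δ → ∃ η > 0, ∀ I ∈ Set.Ioo (0:ℝ) (min η r₀), ∀ θ : ℝ,
      ‖ψ I θ‖ ≤ δ)
    -- the coefficient `a(I,θ) = ∂_yH(ψ(I,θ))/ω(I)`
    (a : ℝ → ℝ → ℝ)
    (ha : ∀ I θ : ℝ, a I θ = (fderiv ℝ H (ψ I θ)) (0, 1) / Om I) :
    ∃ r : ℝ, 0 < r ∧ r ≤ r₀ ∧ ∃ C > 0, ∀ I ∈ Set.Ioo (0:ℝ) r, ∀ θ : ℝ,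
      (∃ aθ : ℝ, HasDerivAt (fun θ' => a I θ') aθ θ ∧
        |a I θ| + |aθ| ≤ C * Real.sqrt I) ∧
      (∃ aI : ℝ, HasDerivAt (fun I' => a I' θ) aI I ∧ |aI| ≤ C / Real.sqrt I) := by
  classical
  have hGC1 : ContDiff ℝ 1 (fderiv ℝ H) := hHC2.fderiv_right (m := 1) (by norm_num)
  have hGdiff : Differentiable ℝ (fderiv ℝ H) := hGC1.differentiable (by norm_num)
  have hHdiff : Differentiable ℝ H := hHC2.differentiable (by norm_num)
  have hBcont : Continuous (fderiv ℝ (fderiv ℝ H)) := hGC1.continuous_fderiv (by norm_num)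
  have hzz : ((0, 0) : ℝ × ℝ) = (0 : ℝ × ℝ) := rfl
  -- positive-definiteness constant m
  have hpos : ∀ u : ℝ × ℝ, u ≠ 0 → 0 < fderiv ℝ (fderiv ℝ H) 0 u u := by
    intro u hu
    have h1 := hHess u hu
    rw [iteratedFDeriv_two_apply] at h1
    simpa [hzz] using h1
  obtain ⟨m, hm, hm0⟩ := posdef_bound (fderiv ℝ (fderiv ℝ H) 0) hpos
  -- bound M on the second derivative on the unit ball
  obtain ⟨M₀, hM₀⟩ := (isCompact_closedBall (0:ℝ×ℝ) 1).exists_bound_of_continuousOn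
    (E := ℝ × ℝ →L[ℝ] ℝ × ℝ →L[ℝ] ℝ) hBcont.continuousOn
  obtain ⟨M, hMdef⟩ : ∃ x : ℝ, x = max M₀ 1 := ⟨_, rfl⟩
  have hM1 : (1:ℝ) ≤ M := by rw [hMdef]; exact le_max_right _ _
  have hMpos : (0:ℝ) < M := lt_of_lt_of_le one_pos hM1
  have hM : ∀ v : ℝ × ℝ, ‖v‖ ≤ 1 → ‖fderiv ℝ (fderiv ℝ H) v‖ ≤ M := by
    intro v hv
    rw [hMdef]
    refine le_trans (hM₀ v ?_) (le_max_left _ _)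
    simpa [Metric.mem_closedBall, dist_eq_norm] using hv
  -- modulus of continuity δ for the second derivative at 0
  obtain ⟨δ₂, hδ₂pos, hδ₂⟩ := (Metric.continuousAt_iff (β := ℝ × ℝ →L[ℝ] ℝ × ℝ →L[ℝ] ℝ)).mp hBcont.continuousAt
    (m / 2) (by positivity)
  obtain ⟨δ, hδdef⟩ : ∃ x : ℝ, x = min (δ₂ / 2) 1 := ⟨_, rfl⟩
  have hδpos : 0 < δ := by rw [hδdef]; exact lt_min (by positivity) one_pos
  have hδ1 : δ ≤ 1 := by rw [hδdef]; exact min_le_right _ _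
  have hδB : ∀ v : ℝ × ℝ, ‖v‖ ≤ δ →
      ‖fderiv ℝ (fderiv ℝ H) v - fderiv ℝ (fderiv ℝ H) 0‖ ≤ m / 2 := by
    intro v hv
    have h1 : dist v 0 < δ₂ := by
      rw [dist_eq_norm, sub_zero]
      rw [hδdef] at hv
      calc ‖v‖ ≤ min (δ₂ / 2) 1 := hv
        _ ≤ δ₂ / 2 := min_le_left _ _
        _ < δ₂ := by linarith
    have h2 := hδ₂ h1
    exact (dist_eq_norm (fderiv ℝ (fderiv ℝ H) v) (fderiv ℝ (fderiv ℝ H) 0)).symm.le.trans h2.le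
  -- bound on Om
  have hΛ : ∀ I ∈ Set.Ioo (0:ℝ) r₀, Om I ≤ 3 * c₂ := om_bound hc₁ hc₂ hK hOm' hKgrowth
  -- smallness radius
  obtain ⟨η, hηpos, hη⟩ := hψsmall δ hδpos
  refine ⟨min η r₀, lt_min hηpos hr₀, min_le_right _ _, ?_⟩
  -- constants
  obtain ⟨CG, hCGdef⟩ : ∃ x : ℝ, x = M * Real.sqrt (4 * c₂ / m) := ⟨_, rfl⟩
  have hCGpos : 0 < CG := by
    rw [hCGdef]
    exact mul_pos hMpos (Real.sqrt_pos.2 (by positivity))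
  obtain ⟨clow, hclowdef⟩ : ∃ x : ℝ, x = Real.sqrt (c₁ / M) := ⟨_, rfl⟩
  have hclowpos : 0 < clow := by
    rw [hclowdef]; exact Real.sqrt_pos.2 (by positivity)
  obtain ⟨cψ0, hcψ0def⟩ : ∃ x : ℝ, x = 3 * c₂ / (m / 2 * clow) := ⟨_, rfl⟩
  have hcψ0pos : 0 < cψ0 := by rw [hcψ0def]; positivity
  obtain ⟨KG, hKGdef⟩ : ∃ x : ℝ, x = M * (3 * c₂) / ω₀ ^ 2 := ⟨_, rfl⟩
  have hKGpos : 0 < KG := by rw [hKGdef]; positivity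
  obtain ⟨εg, hεgdef⟩ : ∃ x : ℝ, x = CG * c₂ / ω₀ ^ 2 := ⟨_, rfl⟩
  have hεgpos : 0 < εg := by
    rw [hεgdef]; exact div_pos (mul_pos hCGpos hc₂) (by positivity)
  obtain ⟨CI, hCIdef⟩ : ∃ x : ℝ, x = (cψ0 + εg / KG) * Real.exp KG := ⟨_, rfl⟩
  have hCIpos : 0 < CI := by
    rw [hCIdef]
    exact mul_pos (add_pos hcψ0pos (div_pos hεgpos hKGpos)) (Real.exp_pos _)
  obtain ⟨Ca, hCadef⟩ : ∃ x : ℝ, x = CG / ω₀ + M * CG / ω₀ ^ 2 := ⟨_, rfl⟩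
  have hCapos : 0 < Ca := by
    rw [hCadef]
    exact add_pos (div_pos hCGpos hω₀) (div_pos (mul_pos hMpos hCGpos) (by positivity))
  obtain ⟨Cb, hCbdef⟩ : ∃ x : ℝ, x = (M * CI * (3 * c₂) + CG * c₂) / ω₀ ^ 2 := ⟨_, rfl⟩
  have hCbpos : 0 < Cb := by
    rw [hCbdef]
    exact div_pos (add_pos (mul_pos (mul_pos hMpos hCIpos) (by positivity))
      (mul_pos hCGpos hc₂)) (by positivity)
  refine ⟨Ca + Cb, by positivity, ?_⟩
  intro I hI θ

  obtain ⟨hI0, hIr⟩ := hI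
  have hIr₀ : I ∈ Set.Ioo (0:ℝ) r₀ := ⟨hI0, lt_of_lt_of_le hIr (min_le_right _ _)⟩
  have hsm : ∀ t : ℝ, ‖ψ I t‖ ≤ δ := fun t => hη I ⟨hI0, hIr⟩ t
  have hKI := hKgrowth I hIr₀
  have hOmI : ω₀ ≤ Om I := hOmlb I hI0
  have hOmpos : 0 < Om I := lt_of_lt_of_le hω₀ hOmI
  have hOmne : Om I ≠ 0 := hOmpos.ne'
  have hOmub : Om I ≤ 3 * c₂ := hΛ I hIr₀
  have hsI : 0 < Real.sqrt I := Real.sqrt_pos.2 hI0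
  have hn01 : ‖(((0:ℝ), (1:ℝ)) : ℝ × ℝ)‖ = 1 := by simp [Prod.norm_def]
  have hn10 : ‖(((1:ℝ), (0:ℝ)) : ℝ × ℝ)‖ = 1 := by simp [Prod.norm_def]
  -- upper bound on ‖ψ‖
  have hup : ∀ t : ℝ, ‖ψ I t‖ ≤ Real.sqrt (4 * c₂ / m) * Real.sqrt I := by
    intro t
    have h1 := H_lower hHC2 hH0 hgrad0 hm hδ1 hm0 hδB (ψ I t) (hsm t)
    have h2 : H (ψ I t) = K I := hlevel I hIr₀ t
    have h3 : ‖ψ I t‖ ^ 2 ≤ 4 * c₂ / m * I := by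
      rw [h2] at h1
      have h4 : K I ≤ c₂ * I := hKI.2.1
      rw [div_mul_eq_mul_div, le_div_iff₀ hm]
      linarith
    calc ‖ψ I t‖ = Real.sqrt (‖ψ I t‖ ^ 2) := (Real.sqrt_sq (norm_nonneg _)).symm
      _ ≤ Real.sqrt (4 * c₂ / m * I) := Real.sqrt_le_sqrt h3
      _ = Real.sqrt (4 * c₂ / m) * Real.sqrt I := Real.sqrt_mul (by positivity) I
  -- lower bound on ‖ψ‖
  have hlowψ : ∀ t : ℝ, clow * Real.sqrt I ≤ ‖ψ I t‖ := by
    intro t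
    rw [hclowdef]
    have h1 := H_upper hHC2 hH0 hgrad0 hM (ψ I t) (le_trans (hsm t) hδ1)
    have h2 : H (ψ I t) = K I := hlevel I hIr₀ t
    have h3 : c₁ / M * I ≤ ‖ψ I t‖ ^ 2 := by
      rw [h2] at h1
      have h4 : c₁ * I ≤ K I := hKI.1
      have h5 : K I ≤ M * ‖ψ I t‖ ^ 2 := le_trans (le_abs_self _) h1
      rw [div_mul_eq_mul_div, div_le_iff₀ hMpos]
      linarith
    calc Real.sqrt (c₁ / M) * Real.sqrt I = Real.sqrt (c₁ / M * I) :=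
          (Real.sqrt_mul (by positivity) I).symm
      _ ≤ Real.sqrt (‖ψ I t‖ ^ 2) := Real.sqrt_le_sqrt h3
      _ = ‖ψ I t‖ := Real.sqrt_sq (norm_nonneg _)
  -- gradient bound
  have hGb : ∀ t : ℝ, ‖fderiv ℝ H (ψ I t)‖ ≤ CG * Real.sqrt I := by
    intro t
    have h1 := grad_bound hHC2 hgrad0 hM (ψ I t) (le_trans (hsm t) hδ1)
    calc ‖fderiv ℝ H (ψ I t)‖ ≤ M * ‖ψ I t‖ := h1
      _ ≤ M * (Real.sqrt (4 * c₂ / m) * Real.sqrt I) :=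
          mul_le_mul_of_nonneg_left (hup t) hMpos.le
      _ = CG * Real.sqrt I := by rw [hCGdef]; ring
  have hGb' : ∀ t : ℝ, ∀ e : ℝ × ℝ, ‖e‖ = 1 →
      |fderiv ℝ H (ψ I t) e| ≤ CG * Real.sqrt I := by
    intro t e he
    calc |fderiv ℝ H (ψ I t) e| ≤ ‖fderiv ℝ H (ψ I t)‖ * ‖e‖ :=
          (fderiv ℝ H (ψ I t)).le_opNorm e
      _ = ‖fderiv ℝ H (ψ I t)‖ := by rw [he, mul_one]
      _ ≤ CG * Real.sqrt I := hGb t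
  have hBψ : ∀ t : ℝ, ‖fderiv ℝ (fderiv ℝ H) (ψ I t)‖ ≤ M :=
    fun t => hM (ψ I t) (le_trans (hsm t) hδ1)
  have hBb : ∀ t : ℝ, ∀ w e : ℝ × ℝ, ‖e‖ = 1 →
      |fderiv ℝ (fderiv ℝ H) (ψ I t) w e| ≤ M * ‖w‖ := by
    intro t w e he
    calc |fderiv ℝ (fderiv ℝ H) (ψ I t) w e|
        ≤ ‖fderiv ℝ (fderiv ℝ H) (ψ I t) w‖ * ‖e‖ :=
          (fderiv ℝ (fderiv ℝ H) (ψ I t) w).le_opNorm e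
      _ = ‖fderiv ℝ (fderiv ℝ H) (ψ I t) w‖ := by rw [he, mul_one]
      _ ≤ ‖fderiv ℝ (fderiv ℝ H) (ψ I t)‖ * ‖w‖ :=
          (fderiv ℝ (fderiv ℝ H) (ψ I t)).le_opNorm w
      _ ≤ M * ‖w‖ := mul_le_mul_of_nonneg_right (hBψ t) (norm_nonneg w)
  -- bound on ψθ
  have hψθb : ∀ t : ℝ, ‖ψθ I t‖ ≤ CG * Real.sqrt I / ω₀ := by
    intro t
    rw [Prod.norm_def]
    apply max_le
    · rw [hθ1 I hIr₀ t, Real.norm_eq_abs, abs_div, abs_of_pos hOmpos, abs_neg]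
      exact div_le_div₀ (by positivity) (hGb' t _ hn01) hω₀ hOmI
    · rw [hθ2 I hIr₀ t, Real.norm_eq_abs, abs_div, abs_of_pos hOmpos]
      exact div_le_div₀ (by positivity) (hGb' t _ hn10) hω₀ hOmI
  refine ⟨?_, ?_⟩
  · -- θ-derivative
    refine ⟨fderiv ℝ (fderiv ℝ H) (ψ I θ) (ψθ I θ) ((0:ℝ), (1:ℝ)) / Om I, ?_, ?_⟩
    · have h1 : HasDerivAt (fun θ' => fderiv ℝ H (ψ I θ'))
          (fderiv ℝ (fderiv ℝ H) (ψ I θ) (ψθ I θ)) θ :=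
        (hGdiff (ψ I θ)).hasFDerivAt.comp_hasDerivAt θ (hψθ I hIr₀ θ)
      have h2 := h1.clm_apply (hasDerivAt_const θ (((0:ℝ), (1:ℝ)) : ℝ × ℝ))
      rw [map_zero, add_zero] at h2
      have h3 := h2.div_const (Om I)
      have h4 : (fun θ' => a I θ') = fun θ' => fderiv ℝ H (ψ I θ') (0, 1) / Om I :=
        funext fun θ' => ha I θ'
      rw [h4]
      exact h3
    · have ha1 : |a I θ| ≤ CG * Real.sqrt I / ω₀ := by
        rw [ha I θ, abs_div, abs_of_pos hOmpos]
        exact div_le_div₀ (by positivity) (hGb' θ _ hn01) hω₀ hOmI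
      have ha2 : |fderiv ℝ (fderiv ℝ H) (ψ I θ) (ψθ I θ) ((0:ℝ), (1:ℝ)) / Om I|
          ≤ M * (CG * Real.sqrt I / ω₀) / ω₀ := by
        rw [abs_div, abs_of_pos hOmpos]
        refine div_le_div₀ (by positivity) ?_ hω₀ hOmI
        exact le_trans (hBb θ _ _ hn01)
          (mul_le_mul_of_nonneg_left (hψθb θ) hMpos.le)
      calc |a I θ| + |fderiv ℝ (fderiv ℝ H) (ψ I θ) (ψθ I θ) ((0:ℝ), (1:ℝ)) / Om I|
          ≤ CG * Real.sqrt I / ω₀ + M * (CG * Real.sqrt I / ω₀) / ω₀ :=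
            add_le_add ha1 ha2
        _ = Ca * Real.sqrt I := by rw [hCadef]; ring
        _ ≤ (Ca + Cb) * Real.sqrt I :=
            mul_le_mul_of_nonneg_right (by linarith) (Real.sqrt_nonneg I)
  · -- I-derivative
    -- derivative of the gradient along ψ in I
    have hN : ∀ (t : ℝ) (e : ℝ × ℝ), HasDerivAt (fun I' => fderiv ℝ H (ψ I' t) e)
        (fderiv ℝ (fderiv ℝ H) (ψ I t) (ψI I t) e) I := by
      intro t e
      have h1 : HasDerivAt (fun I' => fderiv ℝ H (ψ I' t))
          (fderiv ℝ (fderiv ℝ H) (ψ I t) (ψI I t)) I :=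
        (hGdiff (ψ I t)).hasFDerivAt.comp_hasDerivAt I (hψI I hIr₀ t)
      have h2 := h1.clm_apply (hasDerivAt_const I e)
      rw [map_zero, add_zero] at h2
      exact h2
    -- the value ψI(I,0)
    have hψ0pair : ψ I 0 = ((0:ℝ), (ψ I 0).2) := by
      have h : ψ I 0 = ((ψ I 0).1, (ψ I 0).2) := rfl
      rw [h, hψ10 I hIr₀]
    have hψI0pair : ψI I 0 = ((0:ℝ), (ψI I 0).2) := by
      have h : ψI I 0 = ((ψI I 0).1, (ψI I 0).2) := rfl
      rw [h, hψI10 I hIr₀]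
    have hGK : fderiv ℝ H (ψ I 0) (ψI I 0) = Om I := by
      have hcomp : HasDerivAt (fun I' => H (ψ I' 0)) (fderiv ℝ H (ψ I 0) (ψI I 0)) I :=
        (hHdiff (ψ I 0)).hasFDerivAt.comp_hasDerivAt I (hψI I hIr₀ 0)
      have heqv : K =ᶠ[nhds I] (fun I' => H (ψ I' 0)) := by
        filter_upwards [isOpen_Ioo.mem_nhds hIr₀] with x hx
        exact (hlevel x hx 0).symm
      exact ((hcomp.congr_of_eventuallyEq heqv).unique (hK I hI0))
    have hnψ0 : ‖ψ I 0‖ = |(ψ I 0).2| := by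
      rw [hψ0pair, Prod.norm_def]; simp
    have hnψI0 : ‖ψI I 0‖ = |(ψI I 0).2| := by
      rw [hψI0pair, Prod.norm_def]; simp
    have hyl : clow * Real.sqrt I ≤ |(ψ I 0).2| := by
      have h := hlowψ 0; rwa [hnψ0] at h
    have hgl : m / 2 * |(ψ I 0).2| ≤ |fderiv ℝ H (ψ I 0) ((0:ℝ), (1:ℝ))| := by
      have h := grad_y_lower hHC2 hgrad0 hm hδ1 hm0 hδB (ψ I 0).2
        (by rw [← hψ0pair]; exact hsm 0)
      rwa [← hψ0pair] at h
    have hGsplit : fderiv ℝ H (ψ I 0) (ψI I 0)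
        = (ψI I 0).2 * fderiv ℝ H (ψ I 0) ((0:ℝ), (1:ℝ)) := by
      have h1 : (ψI I 0 : ℝ × ℝ) = (ψI I 0).2 • (((0:ℝ), (1:ℝ)) : ℝ × ℝ) := by
        rw [hψI0pair]; simp [Prod.smul_mk]
      conv_lhs => rw [h1]
      rw [_root_.map_smul, smul_eq_mul]
    have hψI0b : ‖ψI I 0‖ ≤ cψ0 / Real.sqrt I := by
      rw [hnψI0]
      have h2 : |(ψI I 0).2| * (m / 2 * (clow * Real.sqrt I)) ≤ 3 * c₂ := by
        calc |(ψI I 0).2| * (m / 2 * (clow * Real.sqrt I))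
            ≤ |(ψI I 0).2| * |fderiv ℝ H (ψ I 0) ((0:ℝ), (1:ℝ))| := by
              refine mul_le_mul_of_nonneg_left ?_ (abs_nonneg _)
              refine le_trans ?_ hgl
              exact mul_le_mul_of_nonneg_left hyl (by positivity)
          _ = |(ψI I 0).2 * fderiv ℝ H (ψ I 0) ((0:ℝ), (1:ℝ))| := (abs_mul _ _).symm
          _ = |Om I| := by rw [← hGsplit, hGK]
          _ = Om I := abs_of_pos hOmpos
          _ ≤ 3 * c₂ := hOmub
      rw [le_div_iff₀ hsI, hcψ0def, le_div_iff₀ (by positivity : (0:ℝ) < m / 2 * clow)]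
      calc |(ψI I 0).2| * Real.sqrt I * (m / 2 * clow)
          = |(ψI I 0).2| * (m / 2 * (clow * Real.sqrt I)) := by ring
        _ ≤ 3 * c₂ := h2
    -- bound on the "force" term
    have hss : Real.sqrt I * Real.sqrt I = I := Real.mul_self_sqrt hI0.le
    have hZb : ∀ (t : ℝ) (e : ℝ × ℝ), ‖e‖ = 1 →
        |fderiv ℝ H (ψ I t) e * Om' I| ≤ CG * c₂ / Real.sqrt I := by
      intro t e he
      rw [abs_mul]
      have h1 : |fderiv ℝ H (ψ I t) e| * |Om' I| ≤ (CG * Real.sqrt I) * (c₂ / I) :=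
        mul_le_mul (hGb' t e he) hKI.2.2 (abs_nonneg _) (by positivity)
      refine le_trans h1 (le_of_eq ?_)
      rw [eq_div_iff hsI.ne']
      have h3 : CG * Real.sqrt I * (c₂ / I) * Real.sqrt I
          = CG * c₂ * (Real.sqrt I * Real.sqrt I) / I := by ring
      rw [h3, hss, mul_div_assoc, div_self hI0.ne', mul_one]

    -- formula and bound for ψIθ
    have hODE : ∀ t : ℝ, ‖ψIθ I t‖ ≤ KG * ‖ψI I t‖ + εg / Real.sqrt I := by
      intro t
      have hd1 : HasDerivAt (fun I' => -(fderiv ℝ H (ψ I' t) ((0:ℝ), (1:ℝ))) / Om I')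
          ((-(fderiv ℝ (fderiv ℝ H) (ψ I t) (ψI I t) ((0:ℝ), (1:ℝ))) * Om I
            - -(fderiv ℝ H (ψ I t) ((0:ℝ), (1:ℝ))) * Om' I) / Om I ^ 2) I :=
        ((hN t _).neg).div (hOm' I hI0) hOmne
      have hd2 : HasDerivAt (fun I' => fderiv ℝ H (ψ I' t) ((1:ℝ), (0:ℝ)) / Om I')
          ((fderiv ℝ (fderiv ℝ H) (ψ I t) (ψI I t) ((1:ℝ), (0:ℝ)) * Om I
            - fderiv ℝ H (ψ I t) ((1:ℝ), (0:ℝ)) * Om' I) / Om I ^ 2) I :=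
        (hN t _).div (hOm' I hI0) hOmne
      have hF := hd1.prodMk hd2
      have heqv : (fun I' => ψθ I' t) =ᶠ[nhds I]
          (fun I' => (-(fderiv ℝ H (ψ I' t) ((0:ℝ), (1:ℝ))) / Om I',
            fderiv ℝ H (ψ I' t) ((1:ℝ), (0:ℝ)) / Om I')) := by
        filter_upwards [isOpen_Ioo.mem_nhds hIr₀] with x hx
        have e1 := hθ1 x hx t
        have e2 := hθ2 x hx t
        have h : ψθ x t = ((ψθ x t).1, (ψθ x t).2) := rfl
        rw [h, e1, e2]
      have hFθ : HasDerivAt (fun I' => ψθ I' t)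
          ((-(fderiv ℝ (fderiv ℝ H) (ψ I t) (ψI I t) ((0:ℝ), (1:ℝ))) * Om I
            - -(fderiv ℝ H (ψ I t) ((0:ℝ), (1:ℝ))) * Om' I) / Om I ^ 2,
           (fderiv ℝ (fderiv ℝ H) (ψ I t) (ψI I t) ((1:ℝ), (0:ℝ)) * Om I
            - fderiv ℝ H (ψ I t) ((1:ℝ), (0:ℝ)) * Om' I) / Om I ^ 2) I :=
        hF.congr_of_eventuallyEq heqv
      have hψIθeq := (hmixed2 I hIr₀ t).unique hFθ
      rw [hψIθeq, Prod.norm_def]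
      have hb1 : |(-(fderiv ℝ (fderiv ℝ H) (ψ I t) (ψI I t) ((0:ℝ), (1:ℝ))) * Om I
            - -(fderiv ℝ H (ψ I t) ((0:ℝ), (1:ℝ))) * Om' I) / Om I ^ 2|
          ≤ (M * ‖ψI I t‖ * (3 * c₂) + CG * c₂ / Real.sqrt I) / ω₀ ^ 2 := by
        refine quot_bound hω₀ hOmI hOmub (by positivity) ?_ ?_
        · rw [abs_neg]; exact hBb t _ _ hn01
        · rw [neg_mul, abs_neg]; exact hZb t _ hn01
      have hb2 : |(fderiv ℝ (fderiv ℝ H) (ψ I t) (ψI I t) ((1:ℝ), (0:ℝ)) * Om I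
            - fderiv ℝ H (ψ I t) ((1:ℝ), (0:ℝ)) * Om' I) / Om I ^ 2|
          ≤ (M * ‖ψI I t‖ * (3 * c₂) + CG * c₂ / Real.sqrt I) / ω₀ ^ 2 := by
        refine quot_bound hω₀ hOmI hOmub (by positivity) ?_ ?_
        · exact hBb t _ _ hn10
        · exact hZb t _ hn10
      have heqc : (M * ‖ψI I t‖ * (3 * c₂) + CG * c₂ / Real.sqrt I) / ω₀ ^ 2
          = KG * ‖ψI I t‖ + εg / Real.sqrt I := by
        rw [hKGdef, hεgdef]; ring
      rw [heqc] at hb1 hb2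
      exact max_le hb1 hb2
    -- Grönwall on [0,1]
    have hgron := norm_le_gronwallBound_of_norm_deriv_right_le
      (f := fun t => ψI I t) (f' := fun t => ψIθ I t) (δ := cψ0 / Real.sqrt I)
      (K := KG) (ε := εg / Real.sqrt I) (a := 0) (b := 1)
      (fun t _ => (hmixed1 I hIr₀ t).continuousAt.continuousWithinAt)
      (fun t _ => (hmixed1 I hIr₀ t).hasDerivWithinAt)
      hψI0b (fun t _ => hODE t)
    have hgb : ∀ t ∈ Set.Icc (0:ℝ) 1,
        gronwallBound (cψ0 / Real.sqrt I) KG (εg / Real.sqrt I) (t - 0) ≤ CI / Real.sqrt I := by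
      intro t ht
      simp only [gronwallBound_of_K_ne_0 hKGpos.ne']
      have he1 : Real.exp (KG * (t - 0)) ≤ Real.exp KG := by
        apply Real.exp_le_exp.2
        have h9 := mul_le_mul_of_nonneg_left (by linarith [ht.2] : t - 0 ≤ 1) hKGpos.le
        linarith
      have he2 : Real.exp (KG * (t - 0)) - 1 ≤ Real.exp KG := by
        linarith [he1]
      have he3 : (0:ℝ) < Real.exp (KG * (t - 0)) := Real.exp_pos _
      calc cψ0 / Real.sqrt I * Real.exp (KG * (t - 0))
            + εg / Real.sqrt I / KG * (Real.exp (KG * (t - 0)) - 1)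
          ≤ cψ0 / Real.sqrt I * Real.exp KG + εg / Real.sqrt I / KG * Real.exp KG := by
            have g1 : cψ0 / Real.sqrt I * Real.exp (KG * (t - 0))
                ≤ cψ0 / Real.sqrt I * Real.exp KG :=
              mul_le_mul_of_nonneg_left he1 (by positivity)
            have g2 : εg / Real.sqrt I / KG * (Real.exp (KG * (t - 0)) - 1)
                ≤ εg / Real.sqrt I / KG * Real.exp KG :=
              mul_le_mul_of_nonneg_left he2 (by positivity)
            linarith
        _ = CI / Real.sqrt I := by rw [hCIdef]; ring
    have hψIb01 : ∀ t ∈ Set.Icc (0:ℝ) 1, ‖ψI I t‖ ≤ CI / Real.sqrt I :=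
      fun t ht => le_trans (hgron t ht) (hgb t ht)
    -- periodicity
    have hfper : Function.Periodic (fun t => ψI I t) 1 := by
      intro t
      have h1 := hψI I hIr₀ (t + 1)
      have h2 : (fun I' => ψ I' (t + 1)) = (fun I' => ψ I' t) := funext fun x => hper x t
      rw [h2] at h1
      exact h1.unique (hψI I hIr₀ t)
    have hψIb : ∀ t : ℝ, ‖ψI I t‖ ≤ CI / Real.sqrt I := by
      intro t
      have h1 : ψI I (t - (⌊t⌋ : ℝ) * 1) = ψI I t := hfper.sub_int_mul_eq ⌊t⌋
      rw [mul_one] at h1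
      rw [← h1]
      refine hψIb01 _ ⟨?_, ?_⟩
      · linarith [Int.floor_le t]
      · linarith [Int.lt_floor_add_one t]
    -- the I-derivative of a
    refine ⟨(fderiv ℝ (fderiv ℝ H) (ψ I θ) (ψI I θ) ((0:ℝ), (1:ℝ)) * Om I
      - fderiv ℝ H (ψ I θ) ((0:ℝ), (1:ℝ)) * Om' I) / Om I ^ 2, ?_, ?_⟩
    · have h1 := (hN θ (((0:ℝ), (1:ℝ)) : ℝ × ℝ)).div (hOm' I hI0) hOmne
      have h4 : (fun I' => a I' θ) = fun I' => fderiv ℝ H (ψ I' θ) (0, 1) / Om I' :=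
        funext fun x => ha x θ
      rw [h4]
      exact h1
    · have hb : |(fderiv ℝ (fderiv ℝ H) (ψ I θ) (ψI I θ) ((0:ℝ), (1:ℝ)) * Om I
          - fderiv ℝ H (ψ I θ) ((0:ℝ), (1:ℝ)) * Om' I) / Om I ^ 2|
          ≤ (M * (CI / Real.sqrt I) * (3 * c₂) + CG * c₂ / Real.sqrt I) / ω₀ ^ 2 := by
        refine quot_bound hω₀ hOmI hOmub (by positivity) ?_ ?_
        · refine le_trans (hBb θ _ _ hn01) ?_
          exact mul_le_mul_of_nonneg_left (hψIb θ) hMpos.le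
        · exact hZb θ _ hn01
      refine le_trans hb ?_
      have heqc : (M * (CI / Real.sqrt I) * (3 * c₂) + CG * c₂ / Real.sqrt I) / ω₀ ^ 2
          = Cb / Real.sqrt I := by
        rw [hCbdef]; ring
      rw [heqc]
      exact (div_le_div_iff_of_pos_right hsI).2 (by linarith)
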